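/- arXiv:1007.4823 — 2 statements merged into one kernel-verified Lean document; each statement's English description precedes it below -/
import Mathlib

section
/- Let λ ∈ ℤ and m, δ ≥ 0. For every formal power series Φ(z,X) ∈ 𝓕[[X]]_δ and every α ∈ GL⁺(2,ℝ), one has Π^δ_m(Φ |^J_λ α) = (Π^δ_m Φ) ‖_{λ+2m+2δ} α. Consequently, if Γ is a discrete subgroup of SL(2,ℝ) and ΓαΓ = Γα_1 ⊔ … ⊔ Γα_s is a disjoint right-coset decomposition, then Π^δ_m(Σ_{i=1}^s Φ |^J_λ α_i) = Σ_{i=1}^s (Π^δ_m Φ) ‖_{λ+2m+2δ} α_i, i.e. Π^δ_m intertwines the Hecke operators T^J_λ(α) on Jacobi-like forms and T^P_{λ+2m+2δ}(α) on quasimodular polynomials. -/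
noncomputable section

open Complex Polynomial

/-- The upper half plane `ℍ`, as a subset of `ℂ`. -/
def UHP : Set ℂ := {z : ℂ | 0 < z.im}

/-- `SL(2, ℝ)`. -/
abbrev SL2R := Matrix.SpecialLinearGroup (Fin 2) ℝ

/-- `GL⁺(2, ℝ)`, the group of real 2×2 matrices of positive determinant. -/
abbrev GL2P := Matrix.GLPos (Fin 2) ℝ

/-- Topology on `SL(2,ℝ)` induced from the space of matrices (used to speak of
discrete subgroups of `SL(2,ℝ)`). -/
instance : TopologicalSpace SL2R :=
  TopologicalSpace.induced (fun g : SL2R => (g : Matrix (Fin 2) (Fin 2) ℝ)) inferInstance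

/-- A function belongs to `𝓕` if it is holomorphic on the upper half plane. -/
def Hol (f : ℂ → ℂ) : Prop := DifferentiableOn ℂ f UHP

/-- `𝔍(γ, z) = cz + d` for `γ ∈ SL(2, ℝ)`. -/
def jJ (γ : SL2R) (z : ℂ) : ℂ := (γ 1 0 : ℝ) * z + (γ 1 1 : ℝ)

/-- `𝔎(γ, z) = c/(cz + d)` for `γ ∈ SL(2, ℝ)`. -/
def kK (γ : SL2R) (z : ℂ) : ℂ := (γ 1 0 : ℝ) / jJ γ z

/-- `γ z = (az+b)/(cz+d)` for `γ ∈ SL(2, ℝ)`. -/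
def mact (γ : SL2R) (z : ℂ) : ℂ := ((γ 0 0 : ℝ) * z + (γ 0 1 : ℝ)) / jJ γ z

/-- The underlying real matrix of an element of `GL⁺(2, ℝ)`. -/
def gmat (α : GL2P) : Matrix (Fin 2) (Fin 2) ℝ :=
  ((α : Matrix.GeneralLinearGroup (Fin 2) ℝ) : Matrix (Fin 2) (Fin 2) ℝ)

/-- The determinant of an element of `GL⁺(2, ℝ)`. -/
def gdet (α : GL2P) : ℝ := (gmat α).det

/-- `𝔍(α, z) = cz + d` for `α ∈ GL⁺(2, ℝ)`. -/
def gJ (α : GL2P) (z : ℂ) : ℂ := (gmat α 1 0 : ℝ) * z + (gmat α 1 1 : ℝ)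

/-- `𝔎(α, z) = c/(cz + d)` for `α ∈ GL⁺(2, ℝ)`. -/
def gK (α : GL2P) (z : ℂ) : ℂ := (gmat α 1 0 : ℝ) / gJ α z

/-- `α z = (az+b)/(cz+d)` for `α ∈ GL⁺(2, ℝ)`. -/
def gact (α : GL2P) (z : ℂ) : ℂ := ((gmat α 0 0 : ℝ) * z + (gmat α 0 1 : ℝ)) / gJ α z

/-- `(det α)^(μ/2)` for `α ∈ GL⁺(2, ℝ)` and `μ ∈ ℤ`. -/
def detpow (α : GL2P) (μ : ℤ) : ℂ := ((gdet α ^ ((μ : ℝ) / 2) : ℝ) : ℂ)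

/-- The weight-`ξ` action `F ∥_ξ γ` of `SL(2,ℝ)` on polynomials over `𝓕`:
`(F ∥_ξ γ)(z, X) = 𝔍(γ,z)^(-ξ) F(γz, 𝔍(γ,z)^2 (X - 𝔎(γ,z)))`. -/
def polyAct (ξ : ℤ) (F : ℂ → Polynomial ℂ) (γ : SL2R) : ℂ → Polynomial ℂ := fun z =>
  Polynomial.C (jJ γ z ^ (-ξ)) *
    (F (mact γ z)).comp (Polynomial.C (jJ γ z ^ 2) * (Polynomial.X - Polynomial.C (kK γ z)))

/-- The weight-`ξ` action `F ∥_ξ α` of `GL⁺(2,ℝ)` on polynomials over `𝓕`: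
`(F ∥_ξ α)(z, X) = (det α)^(ξ/2) 𝔍(α,z)^(-ξ) F(αz, (det α)⁻¹ 𝔍(α,z)^2 (X - 𝔎(α,z)))`. -/
def polyActG (ξ : ℤ) (F : ℂ → Polynomial ℂ) (α : GL2P) : ℂ → Polynomial ℂ := fun z =>
  Polynomial.C (detpow α ξ * gJ α z ^ (-ξ)) *
    (F (gact α z)).comp
      (Polynomial.C ((gdet α : ℂ)⁻¹ * gJ α z ^ 2) * (Polynomial.X - Polynomial.C (gK α z)))

/-- The weight-`l` action `Φ |^J_l γ` of `SL(2,ℝ)` on formal power series over `𝓕`: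
`(Φ |^J_l γ)(z, X) = 𝔍(γ,z)^(-l) e^(-𝔎(γ,z) X) Φ(γz, 𝔍(γ,z)^(-2) X)`. -/
def psAct (l : ℤ) (Φ : ℂ → PowerSeries ℂ) (γ : SL2R) : ℂ → PowerSeries ℂ := fun z =>
  PowerSeries.C (jJ γ z ^ (-l)) *
    (PowerSeries.mk fun n => (-(kK γ z)) ^ n / (n.factorial : ℂ)) *
    PowerSeries.rescale (jJ γ z ^ (-2 : ℤ)) (Φ (mact γ z))

/-- The weight-`l` action `Φ |^J_l α` of `GL⁺(2,ℝ)` on formal power series over `𝓕`: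
`(Φ |^J_l α)(z, X) = (det α)^(l/2) 𝔍(α,z)^(-l) e^(-𝔎(α,z) X) Φ(αz, (det α) 𝔍(α,z)^(-2) X)`. -/
def psActG (l : ℤ) (Φ : ℂ → PowerSeries ℂ) (α : GL2P) : ℂ → PowerSeries ℂ := fun z =>
  PowerSeries.C (detpow α l * gJ α z ^ (-l)) *
    (PowerSeries.mk fun n => (-(gK α z)) ^ n / (n.factorial : ℂ)) *
    PowerSeries.rescale ((gdet α : ℂ) * gJ α z ^ (-2 : ℤ)) (Φ (gact α z))

/-- The map `Π^δ_m`: for `Φ(z,X) = Σ_k φ_k(z) X^(k+δ)`,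
`(Π^δ_m Φ)(z, X) = Σ_{r=0}^m (1/r!) φ_(m-r)(z) X^r`. -/
def PiDM (δ m : ℕ) (Φ : ℂ → PowerSeries ℂ) : ℂ → Polynomial ℂ := fun z =>
  ∑ r ∈ Finset.range (m + 1),
    Polynomial.C ((PowerSeries.coeff (m - r + δ) (Φ z)) / (r.factorial : ℂ)) *
      Polynomial.X ^ r

/-- Membership in `𝓕_m[X]`: degree at most `m` and holomorphic coefficients. -/
def InFmX (m : ℕ) (F : ℂ → Polynomial ℂ) : Prop :=
  (∀ z : ℂ, (F z).degree ≤ (m : WithBot ℕ)) ∧ ∀ r : ℕ, Hol fun z => (F z).coeff r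

/-- Membership in `𝓕[[X]]_δ = X^δ 𝓕[[X]]` with holomorphic coefficients. -/
def InFXd (δ : ℕ) (Φ : ℂ → PowerSeries ℂ) : Prop :=
  (∀ z : ℂ, ∀ k < δ, PowerSeries.coeff k (Φ z) = 0) ∧
    ∀ k : ℕ, Hol fun z => PowerSeries.coeff k (Φ z)

/-- `QP^m_ξ(Γ)`: quasimodular polynomials of weight `ξ` and degree at most `m` for `Γ`. -/
def IsQP (Γ : Subgroup SL2R) (ξ : ℤ) (m : ℕ) (F : ℂ → Polynomial ℂ) : Prop :=
  InFmX m F ∧ ∀ γ ∈ Γ, ∀ z ∈ UHP, polyAct ξ F γ z = F z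

/-- `J_l(Γ)_δ`: Jacobi-like forms of weight `l` for `Γ` lying in `𝓕[[X]]_δ`. -/
def IsJF (Γ : Subgroup SL2R) (l : ℤ) (δ : ℕ) (Φ : ℂ → PowerSeries ℂ) : Prop :=
  InFXd δ Φ ∧ ∀ γ ∈ Γ, ∀ z ∈ UHP, psAct l Φ γ z = Φ z

/-- `M_μ(Γ)`: modular forms of weight `μ` for `Γ` (cusp conditions suppressed). -/
def IsModular (Γ : Subgroup SL2R) (μ : ℤ) (f : ℂ → ℂ) : Prop :=
  Hol f ∧ ∀ γ ∈ Γ, ∀ z ∈ UHP, jJ γ z ^ (-μ) * f (mact γ z) = f z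

/-- `QM^m_ξ(Γ)`: quasimodular forms of weight `ξ` and depth at most `m` for `Γ`. -/
def IsQM (Γ : Subgroup SL2R) (ξ : ℤ) (m : ℕ) (f : ℂ → ℂ) : Prop :=
  Hol f ∧ ∃ g : ℕ → ℂ → ℂ, (∀ r, Hol (g r)) ∧
    ∀ γ ∈ Γ, ∀ z ∈ UHP,
      jJ γ z ^ (-ξ) * f (mact γ z) = ∑ r ∈ Finset.range (m + 1), g r z * kK γ z ^ r

/-- The factorial `t!` of an integer `t` (equal to `(t.toNat)!`; intended for `t ≥ 0`). -/
def zfact (t : ℤ) : ℂ := (t.toNat.factorial : ℂ)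


lemma gdet_pos (α : GL2P) : 0 < gdet α := by
  have := (Matrix.mem_glpos _).1 α.prop
  simpa [gdet, gmat, Matrix.GeneralLinearGroup.val_det_apply] using this

lemma gdetC_ne (α : GL2P) : (gdet α : ℂ) ≠ 0 := by
  exact_mod_cast (gdet_pos α).ne'

lemma gJ_ne_zero (α : GL2P) {z : ℂ} (hz : z ∈ UHP) : gJ α z ≠ 0 := by
  have h : ![gmat α 1 0, gmat α 1 1] ≠ 0 := by
    intro h
    have h0 : gmat α 1 0 = 0 := congr_fun h 0
    have h1 : gmat α 1 1 = 0 := congr_fun h 1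
    have := gdet_pos α
    rw [gdet, Matrix.det_fin_two, h0, h1] at this
    simp at this
  have := UpperHalfPlane.linear_ne_zero (cd := ![gmat α 1 0, gmat α 1 1]) ⟨z, hz⟩ h
  simpa [gJ] using this

lemma detpow_split (α : GL2P) (l : ℤ) (n : ℕ) :
    detpow α (l + 2 * n) = detpow α l * (gdet α : ℂ) ^ n := by
  have hd := gdet_pos α
  rw [detpow, detpow]
  push_cast
  rw [show ((l : ℝ) + 2 * n) / 2 = (l : ℝ) / 2 + n by ring,
    Real.rpow_add hd, Real.rpow_natCast]
  push_cast
  ring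

lemma coeff_psActG (l : ℤ) (Φ : ℂ → PowerSeries ℂ) (α : GL2P) (z : ℂ) (k : ℕ) :
    PowerSeries.coeff k (psActG l Φ α z) =
      (detpow α l * gJ α z ^ (-l)) *
        ∑ i ∈ Finset.range (k + 1),
          ((-(gK α z)) ^ i / (i.factorial : ℂ)) *
            (((gdet α : ℂ) * gJ α z ^ (-2 : ℤ)) ^ (k - i) *
              PowerSeries.coeff (k - i) (Φ (gact α z))) := by
  rw [psActG, mul_assoc, PowerSeries.coeff_C_mul, PowerSeries.coeff_mul,
    Finset.Nat.sum_antidiagonal_eq_sum_range_succ_mk]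
  simp [PowerSeries.coeff_rescale, PowerSeries.coeff_mk, mul_assoc]

lemma coeff_PiDM (δ m : ℕ) (Ψ : ℂ → PowerSeries ℂ) (z : ℂ) (n : ℕ) :
    (PiDM δ m Ψ z).coeff n =
      if n ≤ m then (PowerSeries.coeff (m - n + δ) (Ψ z)) / (n.factorial : ℂ) else 0 := by
  rw [PiDM, Polynomial.finset_sum_coeff]
  simp only [Polynomial.coeff_C_mul, Polynomial.coeff_X_pow, mul_ite, mul_one, mul_zero]
  rw [Finset.sum_ite_eq (Finset.range (m+1)) n
    (fun r => (PowerSeries.coeff (m - r + δ) (Ψ z)) / (r.factorial : ℂ))]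
  simp [Finset.mem_range, Nat.lt_succ_iff]

lemma coeff_polyActG (ξ : ℤ) (δ m : ℕ) (Φ : ℂ → PowerSeries ℂ) (α : GL2P) (z : ℂ) (n : ℕ) :
    (polyActG ξ (PiDM δ m Φ) α z).coeff n =
      (detpow α ξ * gJ α z ^ (-ξ)) *
        ∑ r ∈ Finset.range (m + 1),
          (PowerSeries.coeff (m - r + δ) (Φ (gact α z)) / (r.factorial : ℂ)) *
            (((gdet α : ℂ)⁻¹ * gJ α z ^ 2) ^ r *
              ((-(gK α z)) ^ (r - n) * (r.choose n : ℂ))) := by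
  rw [polyActG, PiDM]
  rw [Polynomial.coeff_C_mul]
  congr 1
  rw [show (Polynomial.X - Polynomial.C (gK α z)) = Polynomial.X + Polynomial.C (-(gK α z)) by
    rw [map_neg]; ring]
  simp only [Polynomial.comp, Polynomial.eval₂_finset_sum, Polynomial.eval₂_mul,
    Polynomial.eval₂_C, Polynomial.eval₂_X_pow]
  rw [Polynomial.finset_sum_coeff]
  refine Finset.sum_congr rfl fun r _ => ?_
  rw [mul_pow, ← Polynomial.C_pow, mul_left_comm,
    Polynomial.coeff_C_mul, Polynomial.coeff_C_mul, Polynomial.coeff_X_add_C_pow]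
  ring

lemma alg (A Jl B φv u E D' c f1 f2 f3 : ℂ) (p q N : ℕ)
    (hu : u ≠ 0) (hf1 : f1 ≠ 0) (hf2 : f2 ≠ 0) (hc0 : c ≠ 0)
    (hc : c * f1 * f2 = f3) (hpq : p + q = N) (hDE : D' * E = u ^ N) :
    A * Jl * (B / f2 * (u ^ p * φv)) / f1
      = A * D' * (Jl * E) * (φv / f3 * (u⁻¹ ^ q * (B * c))) := by
  have hf3 : f3 ≠ 0 := by rw [← hc]; exact mul_ne_zero (mul_ne_zero hc0 hf1) hf2
  subst hc
  have hDE' : D' * E = u ^ p * u ^ q := by rw [hDE, ← hpq, pow_add]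
  rw [inv_pow]
  field_simp
  linear_combination (-(A * Jl * B * φv)) * hDE'

lemma main_eq (l : ℤ) (m δ : ℕ) (Φ : ℂ → PowerSeries ℂ) (hΦ : InFXd δ Φ)
    (α : GL2P) (z : ℂ) (hz : z ∈ UHP) :
    PiDM δ m (psActG l Φ α) z =
      polyActG (l + 2 * (m : ℤ) + 2 * (δ : ℤ)) (PiDM δ m Φ) α z := by
  have hJ : gJ α z ≠ 0 := gJ_ne_zero α hz
  have hD : (gdet α : ℂ) ≠ 0 := gdetC_ne α
  set J := gJ α z with hJdef
  set K := gK α z with hKdef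
  set D := (gdet α : ℂ) with hDdef
  set w := gact α z with hwdef
  set u := D * J ^ (-2 : ℤ) with hudef
  have hu : u ≠ 0 := mul_ne_zero hD (zpow_ne_zero _ hJ)
  set φ := fun b : ℕ => PowerSeries.coeff b (Φ w) with hφdef
  ext n
  rw [coeff_PiDM, coeff_polyActG]
  -- rewrite the RHS prefactor
  have h1 : detpow α (l + 2 * (m : ℤ) + 2 * (δ : ℤ)) = detpow α l * D ^ (m + δ) := by
    rw [show l + 2 * (m : ℤ) + 2 * (δ : ℤ) = l + 2 * ((m + δ : ℕ) : ℤ) by push_cast; ring]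
    exact detpow_split α l (m + δ)
  have h2 : J ^ (-(l + 2 * (m : ℤ) + 2 * (δ : ℤ))) = J ^ (-l) * (J ^ (-2 : ℤ)) ^ (m + δ) := by
    rw [show -(l + 2 * (m : ℤ) + 2 * (δ : ℤ)) = -l + (-2) * ((m + δ : ℕ) : ℤ) by push_cast; ring,
      zpow_add₀ hJ, zpow_mul, zpow_natCast]
  have h3 : D⁻¹ * J ^ 2 = u⁻¹ := by
    rw [hudef, mul_inv, zpow_neg, inv_inv, zpow_two, sq]
  rw [h1, h2, h3]
  by_cases hn : n ≤ m
  · rw [if_pos hn, coeff_psActG]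
    set k := m - n + δ with hkdef
    -- LHS: restrict sum to range (m - n + 1)
    have hL : ∑ i ∈ Finset.range (k + 1),
        ((-K) ^ i / (i.factorial : ℂ)) * (u ^ (k - i) * φ (k - i)) =
        ∑ i ∈ Finset.range (m - n + 1),
          ((-K) ^ i / (i.factorial : ℂ)) * (u ^ (k - i) * φ (k - i)) := by
      refine (Finset.sum_subset ?_ ?_).symm
      · intro i hi
        simp only [Finset.mem_range] at hi ⊢
        omega
      · intro i hi hni
        simp only [Finset.mem_range] at hi hni
        have : φ (k - i) = 0 := hΦ.1 w (k - i) (by omega)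
        rw [this]; ring
    -- RHS: restrict sum to Icc n m then reindex
    have hR : ∑ r ∈ Finset.range (m + 1),
        (φ (m - r + δ) / (r.factorial : ℂ)) * (u⁻¹ ^ r * ((-K) ^ (r - n) * (r.choose n : ℂ))) =
        ∑ i ∈ Finset.range (m - n + 1),
          (φ (m - (n + i) + δ) / ((n + i).factorial : ℂ)) *
            (u⁻¹ ^ (n + i) * ((-K) ^ ((n + i) - n) * ((n + i).choose n : ℂ))) := by
      have step1 : ∑ r ∈ Finset.range (m + 1),
          (φ (m - r + δ) / (r.factorial : ℂ)) * (u⁻¹ ^ r * ((-K) ^ (r - n) * (r.choose n : ℂ))) =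
          ∑ r ∈ Finset.Ico n (m + 1),
          (φ (m - r + δ) / (r.factorial : ℂ)) * (u⁻¹ ^ r * ((-K) ^ (r - n) * (r.choose n : ℂ))) := by
        refine (Finset.sum_subset ?_ ?_).symm
        · intro r hr
          simp only [Finset.mem_Ico, Finset.mem_range] at hr ⊢
          omega
        · intro r hr hnr
          simp only [Finset.mem_Ico, Finset.mem_range] at hr hnr
          have : r.choose n = 0 := Nat.choose_eq_zero_of_lt (by omega)
          rw [this]
          push_cast
          ring
      rw [step1, Finset.sum_Ico_eq_sum_range, show m + 1 - n = m - n + 1 by omega]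
    rw [hL, hR, Finset.mul_sum, Finset.mul_sum, Finset.sum_div]
    refine Finset.sum_congr rfl fun i hi => ?_
    simp only [Finset.mem_range] at hi
    have e1 : m - (n + i) + δ = k - i := by omega
    have e2 : n + i - n = i := by omega
    have hDu : D ^ (m + δ) * (J ^ (-2 : ℤ)) ^ (m + δ) = u ^ (m + δ) := (mul_pow _ _ _).symm
    have hp : u ^ (k - i) * u ^ (n + i) = u ^ (m + δ) := by
      rw [← pow_add]; congr 1; omega
    have hcc : (n + i).choose n = (n + i).choose i := by
      rw [← Nat.choose_symm (Nat.le_add_right n i), Nat.add_sub_cancel_left]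
    have hc : (((n + i).choose n : ℕ) : ℂ) * (n.factorial : ℂ) * (i.factorial : ℂ)
        = ((n + i).factorial : ℂ) := by
      rw [hcc]
      exact_mod_cast congrArg (Nat.cast : ℕ → ℂ) (Nat.add_choose_mul_factorial_mul_factorial n i)
    have hcne : (((n + i).choose n : ℕ) : ℂ) ≠ 0 := by
      exact_mod_cast (Nat.choose_pos (Nat.le_add_right n i)).ne'
    have hfn : ((n.factorial : ℕ) : ℂ) ≠ 0 := by exact_mod_cast n.factorial_ne_zero
    have hfi : ((i.factorial : ℕ) : ℂ) ≠ 0 := by exact_mod_cast i.factorial_ne_zero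
    rw [e1, e2]
    exact alg _ _ _ _ u _ _ _ _ _ _ (k - i) (n + i) (m + δ) hu hfn hfi hcne hc (by omega) hDu
  · rw [if_neg hn]
    have : ∀ r ∈ Finset.range (m + 1),
        (φ (m - r + δ) / (r.factorial : ℂ)) * (u⁻¹ ^ r * ((-K) ^ (r - n) * (r.choose n : ℂ)))
          = 0 := by
      intro r hr
      simp only [Finset.mem_range] at hr
      have : r.choose n = 0 := Nat.choose_eq_zero_of_lt (by omega)
      rw [this]; push_cast; ring
    rw [Finset.sum_congr rfl this]
    simp

lemma PiDM_sum {s : ℕ} (Ψ : Fin s → ℂ → PowerSeries ℂ) (δ m : ℕ) (z : ℂ) :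
    PiDM δ m (fun w => ∑ i, Ψ i w) z = ∑ i, PiDM δ m (Ψ i) z := by
  unfold PiDM
  rw [Finset.sum_comm]
  refine Finset.sum_congr rfl fun r _ => ?_
  rw [map_sum, Finset.sum_div, map_sum, Finset.sum_mul]

-- STATEMENT 11
theorem stmt11 (Γ : Subgroup SL2R) (hΓ : DiscreteTopology Γ) (l : ℤ) (m δ : ℕ)
    (Φ : ℂ → PowerSeries ℂ) (hΦ : InFXd δ Φ) :
    (∀ α : GL2P, ∀ z ∈ UHP,
      PiDM δ m (psActG l Φ α) z =
        polyActG (l + 2 * (m : ℤ) + 2 * (δ : ℤ)) (PiDM δ m Φ) α z) ∧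
    (∀ (α : GL2P) (s : ℕ) (A : Fin s → GL2P),
      (∀ i, ∃ γ₁ ∈ Γ, ∃ γ₂ ∈ Γ, A i = (γ₁ : GL2P) * α * (γ₂ : GL2P)) →
      (∀ γ₁ ∈ Γ, ∀ γ₂ ∈ Γ,
        ∃ i, ∃ γ ∈ Γ, (γ₁ : GL2P) * α * (γ₂ : GL2P) = (γ : GL2P) * A i) →
      (∀ i j : Fin s, (∃ γ ∈ Γ, A i = (γ : GL2P) * A j) → i = j) →
      ∀ z ∈ UHP,
        PiDM δ m (fun w => ∑ i, psActG l Φ (A i) w) z =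
          ∑ i, polyActG (l + 2 * (m : ℤ) + 2 * (δ : ℤ)) (PiDM δ m Φ) (A i) z) := by
  constructor
  · intro α z hz
    exact main_eq l m δ Φ hΦ α z hz
  · intro α s A _ _ _ z hz
    rw [PiDM_sum]
    exact Finset.sum_congr rfl fun i _ => main_eq l m δ Φ hΦ (A i) z hz
end
end

section
/- Let Γ be a discrete subgroup of SL(2,ℝ), let m ≥ 1 and ξ ∈ ℤ with ξ > 2m, let δ ≥ 0, and let F(z,X) ∈ QP^m_ξ(Γ) be a quasimodular polynomial. Then F(z,X) − m! · (Π^δ_m(Ξ̂_δ(𝔖_m F)))(z,X) is a polynomial of degree at most m−1 in X and is a quasimodular polynomial belonging to QP^{m−1}_ξ(Γ), where for f = 𝔖_m F (a modular form of weight ξ−2m) one sets (Ξ̂_δ f)(z,X) = (ξ−2m−1)! Σ_{ℓ≥0} [f^{(ℓ)}(z) / (ℓ! (ℓ+ξ−2m−1)!)] X^{ℓ+δ}. -/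
noncomputable section

open Complex Polynomial

-- STATEMENT 14 def
/-- The Cohen–Kuznetsov lifting `Ξ̂_δ f` of a modular form `f` of weight `w`. -/
def XiHat (w : ℤ) (δ : ℕ) (f : ℂ → ℂ) : ℂ → PowerSeries ℂ := fun z =>
  PowerSeries.mk fun N =>
    if δ ≤ N then
      zfact (w - 1) * deriv^[N - δ] f z /
        (((N - δ).factorial : ℂ) * zfact (((N - δ : ℕ) : ℤ) + w - 1))
    else 0

section Aux

lemma isOpen_UHP : IsOpen UHP := isOpen_lt continuous_const Complex.continuous_im

lemma sl_det (γ : SL2R) : (γ 0 0 : ℝ) * γ 1 1 - γ 0 1 * γ 1 0 = 1 := by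
  have h := γ.2
  rwa [Matrix.det_fin_two] at h

lemma jJ_ne (γ : SL2R) {z : ℂ} (hz : z ∈ UHP) : jJ γ z ≠ 0 := by
  intro h
  have h1 : (γ 1 0 : ℝ) * z.im = 0 := by
    have h2 := congrArg Complex.im h
    simpa [jJ, Complex.add_im, Complex.mul_im] using h2
  have hz' : 0 < z.im := hz
  have hc : (γ 1 0 : ℝ) = 0 := by
    rcases mul_eq_zero.1 h1 with h3 | h3
    · exact h3
    · exact absurd h3 (ne_of_gt hz')
  have h3 : (γ 1 1 : ℝ) = 0 := by
    have h2 : ((γ 1 1 : ℝ) : ℂ) = 0 := by simpa [jJ, hc] using h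
    exact_mod_cast h2
  have hd := sl_det γ
  rw [hc, h3] at hd
  simp at hd

lemma mact_im (γ : SL2R) (z : ℂ) : (mact γ z).im = z.im / Complex.normSq (jJ γ z) := by
  have hdet := sl_det γ
  rw [mact, Complex.div_im, div_sub_div_same]
  congr 1
  simp only [jJ, Complex.add_im, Complex.add_re, Complex.mul_im, Complex.mul_re,
    Complex.ofReal_im, Complex.ofReal_re]
  linear_combination z.im * hdet

lemma mact_mem (γ : SL2R) {z : ℂ} (hz : z ∈ UHP) : mact γ z ∈ UHP := by
  have h : 0 < Complex.normSq (jJ γ z) := Complex.normSq_pos.2 (jJ_ne γ hz)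
  show (0:ℝ) < (mact γ z).im
  rw [mact_im]
  exact div_pos hz h

lemma hasDerivAt_jJ (γ : SL2R) (z : ℂ) : HasDerivAt (jJ γ) (((γ 1 0 : ℝ)) : ℂ) z := by
  have h := (((hasDerivAt_id z).const_mul (((γ 1 0 : ℝ)) : ℂ)).add_const (((γ 1 1 : ℝ)) : ℂ))
  exact h.congr_deriv (mul_one _)

lemma hasDerivAt_kK (γ : SL2R) {z : ℂ} (hz : z ∈ UHP) : HasDerivAt (kK γ) (-(kK γ z)^2) z := by
  have hJ := jJ_ne γ hz
  have h := (hasDerivAt_const z (((γ 1 0 : ℝ)) : ℂ)).div (hasDerivAt_jJ γ z) hJ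
  refine h.congr_deriv ?_
  rw [kK]
  field_simp
  ring

lemma hasDerivAt_mact (γ : SL2R) {z : ℂ} (hz : z ∈ UHP) :
    HasDerivAt (mact γ) (((jJ γ z)^2)⁻¹) z := by
  have hJ := jJ_ne γ hz
  have hnum : HasDerivAt (fun z : ℂ => ((γ 0 0 : ℝ) : ℂ) * z + ((γ 0 1 : ℝ) : ℂ))
      (((γ 0 0 : ℝ)) : ℂ) z := by
    simpa using (((hasDerivAt_id z).const_mul (((γ 0 0 : ℝ)) : ℂ)).add_const ((γ 0 1 : ℝ) : ℂ))
  have h := hnum.div (hasDerivAt_jJ γ z) hJ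
  have hdet : ((γ 0 0 : ℝ) : ℂ) * ((γ 1 1 : ℝ) : ℂ) - ((γ 0 1 : ℝ) : ℂ) * ((γ 1 0 : ℝ) : ℂ) = 1 := by
    exact_mod_cast congrArg (fun x : ℝ => (x : ℂ)) (sl_det γ)
  have hnum1 : ((γ 0 0 : ℝ) : ℂ) * jJ γ z - (((γ 0 0 : ℝ) : ℂ) * z + ((γ 0 1 : ℝ) : ℂ)) * ((γ 1 0 : ℝ) : ℂ) = 1 := by
    rw [jJ]; linear_combination hdet
  rw [hnum1, one_div] at h
  exact h

lemma hol_iter {f : ℂ → ℂ} (hf : Hol f) : ∀ n, Hol (deriv^[n] f)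
  | 0 => hf
  | (n+1) => by
      have h := hol_iter hf n
      have h2 := (h.analyticOnNhd isOpen_UHP).deriv
      rw [Function.iterate_succ_apply']
      exact h2.differentiableOn

lemma hasDerivAt_iter {f : ℂ → ℂ} (hf : Hol f) (n : ℕ) {x : ℂ} (hx : x ∈ UHP) :
    HasDerivAt (deriv^[n] f) (deriv^[n+1] f x) x := by
  have h := (hol_iter hf n).differentiableAt (isOpen_UHP.mem_nhds hx)
  rw [Function.iterate_succ_apply']
  exact h.hasDerivAt

end Aux
section DerivLaw

/-- coefficient in the derivative law -/
def dcoef (W n s : ℕ) : ℂ := (n.choose s : ℂ) * ((n+W).factorial : ℂ) / ((s+W).factorial : ℂ)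

lemma fact_ne (k : ℕ) : ((k.factorial : ℂ)) ≠ 0 := Nat.cast_ne_zero.2 (Nat.factorial_ne_zero k)

lemma coef_rec (W n i : ℕ) (hi : i < n) :
    ((W+n+i+2 : ℕ) : ℂ) * dcoef W n (i+1) + dcoef W n i = dcoef W (n+1) (i+1) := by
  obtain ⟨d, hd⟩ : ∃ d, n = i + (d+1) := ⟨n - i - 1, by omega⟩
  subst hd
  have h1 : (i+(d+1)).choose (i+1) * (i+1) = (i+(d+1)).choose i * (d+1) := by
    have h := Nat.choose_succ_right_eq (i+(d+1)) i
    have h2 : i + (d+1) - i = d + 1 := by omega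
    rwa [h2] at h
  have h1' : ((i+(d+1)).choose (i+1) : ℂ) * (i+1) = ((i+(d+1)).choose i : ℂ) * (d+1) := by
    exact_mod_cast congrArg (fun x : ℕ => (x : ℂ)) h1
  have hpas : (((i+(d+1)+1).choose (i+1) : ℂ))
      = ((i+(d+1)).choose i : ℂ) + ((i+(d+1)).choose (i+1) : ℂ) := by
    exact_mod_cast congrArg (fun x : ℕ => (x : ℂ)) (Nat.choose_succ_succ (i+(d+1)) i)
  have hkey : ((W+(i+(d+1))+i+2 : ℕ) : ℂ) * ((i+(d+1)).choose (i+1) : ℂ)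
      + ((i+1+W : ℕ) : ℂ) * ((i+(d+1)).choose i : ℂ)
      = ((i+(d+1)+1+W : ℕ) : ℂ) * (((i+(d+1)+1).choose (i+1) : ℂ)) := by
    push_cast
    push_cast at h1' hpas
    linear_combination h1' - ((i:ℂ)+(d+1)+1+W) * hpas
  have hne1 := fact_ne (i+W)
  have hne2 := fact_ne (i+1+W)
  have hf1 : (((i+1+W).factorial : ℂ)) = ((i+1+W : ℕ) : ℂ) * ((i+W).factorial : ℂ) := by
    have h : i+1+W = (i+W)+1 := by ring
    rw [h, Nat.factorial_succ]; push_cast; ring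
  have hf2 : (((i+(d+1)+1+W).factorial : ℂ))
      = ((i+(d+1)+1+W : ℕ) : ℂ) * (((i+(d+1)+W).factorial : ℂ)) := by
    have h : i+(d+1)+1+W = (i+(d+1)+W)+1 := by ring
    rw [h, Nat.factorial_succ]; push_cast; ring
  have h9 : (((i+(d+1)).choose i : ℂ) * ((i+(d+1)+W).factorial : ℂ)) / ((i+W).factorial : ℂ)
      = (((i+(d+1)).choose i : ℂ) * ((i+(d+1)+W).factorial : ℂ) * ((i+1+W : ℕ) : ℂ))
        / (((i+1+W).factorial : ℂ)) := by
    rw [div_eq_div_iff hne1 hne2, hf1]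
    ring
  simp only [dcoef]
  rw [h9, hf2, ← mul_div_assoc, ← add_div]
  congr 1
  push_cast
  push_cast at hkey
  linear_combination (((i+(d+1)+W).factorial : ℂ)) * hkey

end DerivLaw
section DerivLaw2

lemma deriv_law {f : ℂ → ℂ} (hf : Hol f) (γ : SL2R) (W : ℕ)
    (hmod : ∀ z ∈ UHP, f (mact γ z) = jJ γ z ^ (W+1) * f z) :
    ∀ n, ∀ z ∈ UHP, deriv^[n] f (mact γ z) =
      jJ γ z ^ (W+1+2*n) * ∑ s ∈ Finset.range (n+1),
        dcoef W n s * kK γ z ^ (n-s) * deriv^[s] f z := by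
  intro n
  induction n with
  | zero =>
    intro z hz
    simp only [Function.iterate_zero_apply, Finset.sum_range_one, Nat.choose_self, dcoef]
    rw [hmod z hz]
    simp [div_self (fact_ne W)]
  | succ n IH =>
    intro z hz
    set J := jJ γ with hJdef
    set K := kK γ with hKdef
    set c0 : ℂ := ((γ 1 0 : ℝ) : ℂ) with hc0
    have hJ : J z ≠ 0 := jJ_ne γ hz
    have hL : HasDerivAt (fun x => deriv^[n] f (mact γ x))
        (deriv^[n+1] f (mact γ z) * ((J z)^2)⁻¹) z :=
      (hasDerivAt_iter hf n (mact_mem γ hz)).comp z (hasDerivAt_mact γ hz)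
    have hterm : ∀ s ∈ Finset.range (n+1), HasDerivAt
        (fun x => dcoef W n s * K x ^ (n-s) * deriv^[s] f x)
        (dcoef W n s * (-((n-s : ℕ) : ℂ)) * K z ^ (n-s+1) * deriv^[s] f z
          + dcoef W n s * K z ^ (n-s) * deriv^[s+1] f z) z := by
      intro s hs
      have hs' : s ≤ n := Nat.lt_succ_iff.mp (Finset.mem_range.mp hs)
      have h1 : HasDerivAt (fun x => dcoef W n s * K x ^ (n-s))
          (dcoef W n s * (((n-s : ℕ) : ℂ) * K z ^ (n-s-1) * (-(K z)^2))) z :=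
        ((hasDerivAt_kK γ hz).pow (n-s)).const_mul (dcoef W n s)
      have h2 := h1.mul (hasDerivAt_iter hf s hz)
      have h3 : (((n-s : ℕ) : ℂ)) * K z ^ (n-s-1) * (-(K z)^2)
          = (-((n-s : ℕ) : ℂ)) * K z ^ (n-s+1) := by
        rcases Nat.eq_or_lt_of_le hs' with h | h
        · subst h; simp
        · obtain ⟨e, he⟩ : ∃ e, n - s = e + 1 := ⟨n - s - 1, by omega⟩
          rw [he]
          simp only [Nat.add_sub_cancel]
          ring
      refine h2.congr_deriv ?_
      rw [h3]
      ring
    have hsum : HasDerivAt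
        (fun x => ∑ s ∈ Finset.range (n+1), dcoef W n s * K x ^ (n-s) * deriv^[s] f x)
        (∑ s ∈ Finset.range (n+1), (dcoef W n s * (-((n-s : ℕ) : ℂ)) * K z ^ (n-s+1) * deriv^[s] f z
          + dcoef W n s * K z ^ (n-s) * deriv^[s+1] f z)) z := HasDerivAt.fun_sum hterm
    have hJpow : HasDerivAt (fun x => J x ^ (W+1+2*n))
        (((W+1+2*n : ℕ) : ℂ) * J z ^ (W+2*n) * c0) z := by
      have h := (hasDerivAt_jJ γ z).pow (W+1+2*n)
      have h2 : W+1+2*n-1 = W+2*n := by omega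
      rw [h2] at h
      exact h
    have hR := hJpow.mul hsum
    have hdeq : deriv^[n+1] f (mact γ z) * ((J z)^2)⁻¹
        = ((W+1+2*n : ℕ) : ℂ) * J z ^ (W+2*n) * c0
            * (∑ s ∈ Finset.range (n+1), dcoef W n s * K z ^ (n-s) * deriv^[s] f z)
          + J z ^ (W+1+2*n) * (∑ s ∈ Finset.range (n+1),
              (dcoef W n s * (-((n-s : ℕ) : ℂ)) * K z ^ (n-s+1) * deriv^[s] f z
                + dcoef W n s * K z ^ (n-s) * deriv^[s+1] f z)) := by
      rw [← hL.deriv, ← hR.deriv]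
      exact Filter.EventuallyEq.deriv_eq
        (Filter.eventuallyEq_of_mem (isOpen_UHP.mem_nhds hz) (fun x hx => IH x hx))
    rw [mul_inv_eq_iff_eq_mul₀ (pow_ne_zero 2 hJ)] at hdeq
    rw [hdeq]
    have hKJ : K z * J z = c0 := by
      rw [hKdef, kK, ← hJdef, ← hc0]
      field_simp
    have hdia : ((W+1+2*n : ℕ) : ℂ) * K z
          * (∑ s ∈ Finset.range (n+1), dcoef W n s * K z ^ (n-s) * deriv^[s] f z)
        + (∑ s ∈ Finset.range (n+1), (dcoef W n s * (-((n-s : ℕ) : ℂ)) * K z ^ (n-s+1) * deriv^[s] f z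
            + dcoef W n s * K z ^ (n-s) * deriv^[s+1] f z))
        = ∑ s ∈ Finset.range (n+1+1), dcoef W (n+1) s * K z ^ (n+1-s) * deriv^[s] f z := by
      rw [Finset.mul_sum, ← Finset.sum_add_distrib]
      have hg : ∀ s ∈ Finset.range (n+1),
          (((W+1+2*n : ℕ) : ℂ) * K z * (dcoef W n s * K z ^ (n-s) * deriv^[s] f z)
            + (dcoef W n s * (-((n-s : ℕ) : ℂ)) * K z ^ (n-s+1) * deriv^[s] f z
              + dcoef W n s * K z ^ (n-s) * deriv^[s+1] f z))
          = ((((W+1+2*n : ℕ) : ℂ) - ((n-s : ℕ) : ℂ)) * dcoef W n s * K z ^ (n-s+1) * deriv^[s] f z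
              + dcoef W n s * K z ^ (n-s) * deriv^[s+1] f z) := by
        intro s hs
        rw [pow_succ]
        ring
      rw [Finset.sum_congr rfl hg, Finset.sum_add_distrib]
      rw [Finset.sum_range_succ' (fun s => (((W+1+2*n : ℕ) : ℂ) - ((n-s : ℕ) : ℂ)) * dcoef W n s
            * K z ^ (n-s+1) * deriv^[s] f z) n]
      rw [Finset.sum_range_succ (fun s => dcoef W n s * K z ^ (n-s) * deriv^[s+1] f z) n]
      rw [Finset.sum_range_succ' (fun s => dcoef W (n+1) s * K z ^ (n+1-s) * deriv^[s] f z) (n+1)]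
      rw [Finset.sum_range_succ (fun i => dcoef W (n+1) (i+1) * K z ^ (n+1-(i+1)) * deriv^[i+1] f z) n]
      have e1 : ∀ i ∈ Finset.range n,
          ((((W+1+2*n : ℕ) : ℂ) - ((n-(i+1) : ℕ) : ℂ)) * dcoef W n (i+1) * K z ^ (n-(i+1)+1) * deriv^[i+1] f z
            + dcoef W n i * K z ^ (n-i) * deriv^[i+1] f z)
          = dcoef W (n+1) (i+1) * K z ^ (n+1-(i+1)) * deriv^[i+1] f z := by
        intro i hi
        have hi' : i < n := Finset.mem_range.mp hi
        have h2 : n - (i+1) + 1 = n - i := by omega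
        have h3 : n + 1 - (i+1) = n - i := by omega
        have h4 : (((W+1+2*n : ℕ) : ℂ) - ((n-(i+1) : ℕ) : ℂ)) = ((W+n+i+2 : ℕ) : ℂ) := by
          have h5 : (n - (i+1) : ℕ) + (W+n+i+2) = W+1+2*n := by omega
          rw [← h5]
          push_cast
          ring
        rw [h2, h3, h4, ← coef_rec W n i hi']
        ring
      have hAB : (∑ i ∈ Finset.range n, ((((W+1+2*n : ℕ) : ℂ) - ((n-(i+1) : ℕ) : ℂ)) * dcoef W n (i+1)
              * K z ^ (n-(i+1)+1) * deriv^[i+1] f z))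
          + (∑ i ∈ Finset.range n, dcoef W n i * K z ^ (n-i) * deriv^[i+1] f z)
          = ∑ i ∈ Finset.range n, dcoef W (n+1) (i+1) * K z ^ (n+1-(i+1)) * deriv^[i+1] f z := by
        rw [← Finset.sum_add_distrib]
        exact Finset.sum_congr rfl e1
      have e0 : (((W+1+2*n : ℕ) : ℂ) - ((n-0 : ℕ) : ℂ)) * dcoef W n 0 * K z ^ (n-0+1) * deriv^[0] f z
          = dcoef W (n+1) 0 * K z ^ (n+1-0) * deriv^[0] f z := by
        simp only [Nat.sub_zero]
        have h4 : (((W+1+2*n : ℕ) : ℂ) - ((n : ℕ) : ℂ)) = ((n+1+W : ℕ) : ℂ) := by push_cast; ring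
        have h5 : dcoef W (n+1) 0 = ((n+1+W : ℕ) : ℂ) * dcoef W n 0 := by
          have h6 : (((n+1+W).factorial : ℂ)) = ((n+1+W : ℕ) : ℂ) * ((n+W).factorial : ℂ) := by
            have h : n+1+W = (n+W)+1 := by ring
            rw [h, Nat.factorial_succ]; push_cast; ring
          simp only [dcoef, Nat.choose_zero_right, Nat.cast_one, one_mul]
          rw [h6]
          ring
        rw [h4, h5]
        try ring
      have en : dcoef W n n * K z ^ (n-n) * deriv^[n+1] f z
          = dcoef W (n+1) (n+1) * K z ^ (n+1-(n+1)) * deriv^[n+1] f z := by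
        unfold dcoef
        simp [div_self (fact_ne (n+W)), div_self (fact_ne (n+1+W))]
      linear_combination hAB + e0 + en
    rw [← hdia, ← hKJ]
    ring
end DerivLaw2
section PolyCoeff

lemma dcoef_zero {W n s : ℕ} (h : n < s) : dcoef W n s = 0 := by
  simp [dcoef, Nat.choose_eq_zero_of_lt h]

/-- coefficient of the correction polynomial -/
def acoef (W m k : ℕ) : ℂ :=
  (m.factorial : ℂ) * ((W.factorial : ℂ) / (((m-k).factorial : ℂ) * (((m-k)+W).factorial : ℂ)))
    / (k.factorial : ℂ)

lemma coeff_comp (p : Polynomial ℂ) {m : ℕ} (hp : p.natDegree < m + 1) (b e : ℂ) (t : ℕ) :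
    (p.comp (Polynomial.C b * (Polynomial.X - Polynomial.C e))).coeff t
      = ∑ k ∈ Finset.range (m+1), p.coeff k * (b^k * ((-e)^(k-t) * (k.choose t : ℂ))) := by
  conv_lhs => rw [p.as_sum_range' (m+1) hp]
  rw [Polynomial.sum_comp, Polynomial.finset_sum_coeff]
  apply Finset.sum_congr rfl
  intro k hk
  rw [← Polynomial.C_mul_X_pow_eq_monomial, Polynomial.mul_comp, Polynomial.C_comp,
    Polynomial.X_pow_comp, mul_pow, ← Polynomial.C_pow, sub_eq_add_neg, ← Polynomial.C_neg,
    Polynomial.coeff_C_mul, Polynomial.coeff_C_mul, Polynomial.coeff_X_add_C_pow]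
  try ring

lemma zfact_nat (k : ℕ) : zfact (k : ℤ) = (k.factorial : ℂ) := by
  unfold zfact
  norm_num

lemma XiHat_coeff (W δ : ℕ) (f : ℂ → ℂ) (z : ℂ) (j : ℕ) :
    PowerSeries.coeff (j + δ) (XiHat ((W:ℤ)+1) δ f z)
      = (W.factorial : ℂ) * deriv^[j] f z
          / ((j.factorial : ℂ) * ((j+W).factorial : ℂ)) := by
  unfold XiHat
  rw [PowerSeries.coeff_mk]
  rw [if_pos (Nat.le_add_left δ j)]
  have h1 : j + δ - δ = j := by omega
  rw [h1]
  have h2 : (W:ℤ) + 1 - 1 = (W:ℤ) := by ring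
  rw [h2, zfact_nat]
  have h3 : ((j:ℕ):ℤ) + ((W:ℤ)+1) - 1 = ((j+W : ℕ) : ℤ) := by push_cast; ring
  rw [h3, zfact_nat]

lemma corr_coeff (m δ W : ℕ) (f : ℂ → ℂ) (z : ℂ) (t : ℕ) :
    (Polynomial.C (m.factorial : ℂ) * PiDM δ m (XiHat ((W:ℤ)+1) δ f) z).coeff t
      = if t ≤ m then acoef W m t * deriv^[m-t] f z else 0 := by
  rw [Polynomial.coeff_C_mul]
  unfold PiDM
  rw [Polynomial.finset_sum_coeff]
  simp only [Polynomial.coeff_C_mul, Polynomial.coeff_X_pow, mul_ite, mul_one, mul_zero]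
  rw [Finset.sum_ite_eq (Finset.range (m+1)) t
    (fun r => PowerSeries.coeff (m - r + δ) (XiHat ((W:ℤ)+1) δ f z) / (r.factorial : ℂ))]
  simp only [Finset.mem_range, Nat.lt_succ_iff]
  by_cases ht : t ≤ m
  · rw [if_pos ht, if_pos ht, XiHat_coeff W δ f z (m-t)]
    unfold acoef
    field_simp
  · rw [if_neg ht, if_neg ht, mul_zero]

lemma corr_natDegree (m δ W : ℕ) (f : ℂ → ℂ) (z : ℂ) :
    (Polynomial.C (m.factorial : ℂ) * PiDM δ m (XiHat ((W:ℤ)+1) δ f) z).natDegree < m + 1 := by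
  rw [Nat.lt_succ_iff, Polynomial.natDegree_le_iff_coeff_eq_zero]
  intro N hN
  rw [corr_coeff, if_neg (by omega)]

end PolyCoeff
section Core

lemma core (W m t s : ℕ) (ht : t ≤ m) (hs : s ≤ m) (K : ℂ) :
    ∑ k ∈ Finset.range (m+1),
      acoef W m k * dcoef W (m-k) s * (-1:ℂ)^(k-t) * K^((k-t)+(m-k-s)) * (k.choose t : ℂ)
    = if s = m - t then acoef W m t else 0 := by
  by_cases hcase : s + t ≤ m
  · obtain ⟨u, hum⟩ : ∃ u, m = t + u + s := ⟨m - t - s, by omega⟩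
    subst hum
    set g : ℕ → ℂ := fun k =>
      acoef W (t+u+s) k * dcoef W (t+u+s-k) s * (-1:ℂ)^(k-t) * K^((k-t)+(t+u+s-k-s)) * (k.choose t : ℂ)
      with hg
    have h1 : ∑ k ∈ Finset.range (t+(u+1)), g k = ∑ k ∈ Finset.range (t+u+s+1), g k := by
      apply Finset.sum_subset
      · exact Finset.range_subset_range.2 (by omega)
      · intro k hk hnk
        have hk1 : t + u < k := by
          simp only [Finset.mem_range] at hk hnk
          omega
        have hk2 : t+u+s-k < s := by
          simp only [Finset.mem_range] at hk
          omega
        simp [hg, dcoef_zero hk2]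
    rw [show ∑ k ∈ Finset.range (t+u+s+1), g k = ∑ k ∈ Finset.range (t+(u+1)), g k from h1.symm]
    rw [Finset.sum_range_add]
    have h2 : ∑ k ∈ Finset.range t, g k = 0 := by
      apply Finset.sum_eq_zero
      intro k hk
      have : k.choose t = 0 := Nat.choose_eq_zero_of_lt (Finset.mem_range.mp hk)
      simp [hg, this]
    rw [h2, zero_add]
    have h3 : ∀ j ∈ Finset.range (u+1), g (t+j)
        = ((t+u+s).factorial : ℂ) * (W.factorial : ℂ) * K^u
            / ((t.factorial : ℂ) * (s.factorial : ℂ) * (u.factorial : ℂ) * ((s+W).factorial : ℂ))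
          * ((-1:ℂ)^j * (u.choose j : ℂ)) := by
      intro j hj
      have hju : j ≤ u := Nat.lt_succ_iff.mp (Finset.mem_range.mp hj)
      have e1 : t + j - t = j := by omega
      have e2 : t + u + s - (t+j) = s + (u-j) := by omega
      have e3 : (t + j - t) + (t+u+s-(t+j)-s) = u := by omega
      simp only [hg]
      unfold acoef dcoef
      rw [e3, e1, e2]
      -- cast factorial identities
      have c1 : ((t+j).factorial : ℂ) = ((t+j).choose t : ℂ) * (t.factorial : ℂ) * (j.factorial : ℂ) := by
        have h := Nat.choose_mul_factorial_mul_factorial (Nat.le_add_right t j)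
        rw [show t + j - t = j by omega] at h
        exact_mod_cast congrArg (fun x : ℕ => (x:ℂ)) h.symm
      have c2 : ((s+(u-j)).factorial : ℂ)
          = ((s+(u-j)).choose s : ℂ) * (s.factorial : ℂ) * ((u-j).factorial : ℂ) := by
        have h := Nat.choose_mul_factorial_mul_factorial (Nat.le_add_right s (u-j))
        rw [show s + (u-j) - s = u - j by omega] at h
        exact_mod_cast congrArg (fun x : ℕ => (x:ℂ)) h.symm
      have c3 : (u.factorial : ℂ) = (u.choose j : ℂ) * (j.factorial : ℂ) * ((u-j).factorial : ℂ) := by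
        have h := Nat.choose_mul_factorial_mul_factorial hju
        exact_mod_cast congrArg (fun x : ℕ => (x:ℂ)) h.symm
      have hCt : ((t+j).choose t : ℂ) ≠ 0 :=
        Nat.cast_ne_zero.2 (Nat.choose_pos (Nat.le_add_right t j)).ne'
      have hCs : ((s+(u-j)).choose s : ℂ) ≠ 0 :=
        Nat.cast_ne_zero.2 (Nat.choose_pos (Nat.le_add_right s (u-j))).ne'
      have hCu : ((u.choose j : ℕ) : ℂ) ≠ 0 := Nat.cast_ne_zero.2 (Nat.choose_pos hju).ne'
      rw [c1, c2, c3]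
      have hAW : ((s+(u-j)+W).factorial : ℂ) ≠ 0 := fact_ne _
      linear_combination
        (((t+u+s).factorial : ℂ) * (W.factorial : ℂ) * (-1:ℂ)^j * K^u
            / ((s.factorial : ℂ) * ((u-j).factorial : ℂ) * (t.factorial : ℂ)
                * (j.factorial : ℂ) * ((s+W).factorial : ℂ))
            * ((s+(u-j)+W).factorial : ℂ) * (((s+(u-j)+W).factorial : ℂ))⁻¹
            * ((t+j).choose t : ℂ) * (((t+j).choose t : ℂ))⁻¹) * mul_inv_cancel₀ hCs
        + (((t+u+s).factorial : ℂ) * (W.factorial : ℂ) * (-1:ℂ)^j * K^u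
            / ((s.factorial : ℂ) * ((u-j).factorial : ℂ) * (t.factorial : ℂ)
                * (j.factorial : ℂ) * ((s+W).factorial : ℂ))
            * ((t+j).choose t : ℂ) * (((t+j).choose t : ℂ))⁻¹) * mul_inv_cancel₀ hAW
        + (((t+u+s).factorial : ℂ) * (W.factorial : ℂ) * (-1:ℂ)^j * K^u
            / ((s.factorial : ℂ) * ((u-j).factorial : ℂ) * (t.factorial : ℂ)
                * (j.factorial : ℂ) * ((s+W).factorial : ℂ))) * mul_inv_cancel₀ hCt
        - (((t+u+s).factorial : ℂ) * (W.factorial : ℂ) * (-1:ℂ)^j * K^u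
            / ((s.factorial : ℂ) * ((u-j).factorial : ℂ) * (t.factorial : ℂ)
                * (j.factorial : ℂ) * ((s+W).factorial : ℂ))) * mul_inv_cancel₀ hCu
    rw [Finset.sum_congr rfl h3, ← Finset.mul_sum]
    have h4 : ∑ j ∈ Finset.range (u+1), (-1:ℂ)^j * (u.choose j : ℂ)
        = if u = 0 then 1 else 0 := by
      have h := Int.alternating_sum_range_choose (n := u)
      have h' := congrArg (fun x : ℤ => (x : ℂ)) h
      push_cast at h'
      exact h'
    rw [h4]
    by_cases hu : u = 0
    · subst hu
      rw [if_pos rfl, mul_one, if_pos (show s = t + 0 + s - t by omega)]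
      unfold acoef
      rw [show t + 0 + s - t = s from by omega]
      rw [pow_zero, Nat.factorial_zero]
      rw [Nat.cast_one]
      field_simp [fact_ne t, fact_ne s, fact_ne (s+W)]
      try ring
      try simp
    · rw [if_neg hu, if_neg (by omega), mul_zero]
  · rw [if_neg (by omega)]
    apply Finset.sum_eq_zero
    intro k hk
    by_cases hkt : k < t
    · simp [Nat.choose_eq_zero_of_lt hkt]
    · have : m - k < s := by omega
      simp [dcoef_zero this]

end Core
section KeySum

lemma key_sum (f : ℂ → ℂ) (hf : Hol f) (γ : SL2R) (W m : ℕ) (ξ : ℤ)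
    (hxi : ξ = (W:ℤ)+1+2*m)
    (hmod : ∀ z ∈ UHP, f (mact γ z) = jJ γ z ^ (W+1) * f z)
    {z : ℂ} (hz : z ∈ UHP) (t : ℕ) (ht : t ≤ m) :
    jJ γ z ^ (-ξ) * ∑ k ∈ Finset.range (m+1),
        acoef W m k * deriv^[m-k] f (mact γ z)
          * ((jJ γ z ^ 2)^k * ((-(kK γ z))^(k-t) * (k.choose t : ℂ)))
      = acoef W m t * deriv^[m-t] f z := by
  have hJ := jJ_ne γ hz
  have hJcollapse : ∀ k, k ≤ m →
      jJ γ z ^ (-ξ) * ((jJ γ z ^ 2)^k * jJ γ z ^ (W+1+2*(m-k))) = 1 := by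
    intro k hk
    have h1 : ((jJ γ z)^2)^k * (jJ γ z)^(W+1+2*(m-k)) = (jJ γ z)^(W+1+2*m) := by
      rw [← pow_mul, ← pow_add]
      congr 1
      omega
    rw [h1, ← zpow_natCast (jJ γ z) (W+1+2*m), ← zpow_add₀ hJ]
    rw [show -ξ + ((W+1+2*m : ℕ) : ℤ) = 0 from by push_cast; omega, zpow_zero]
  rw [Finset.mul_sum]
  have hstep : ∀ k ∈ Finset.range (m+1),
      jJ γ z ^ (-ξ) * (acoef W m k * deriv^[m-k] f (mact γ z)
          * ((jJ γ z ^ 2)^k * ((-(kK γ z))^(k-t) * (k.choose t : ℂ))))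
      = ∑ s ∈ Finset.range (m+1),
          (acoef W m k * dcoef W (m-k) s * (-1:ℂ)^(k-t) * kK γ z^((k-t)+(m-k-s)) * (k.choose t : ℂ))
            * deriv^[s] f z := by
    intro k hk
    have hkm : k ≤ m := Nat.lt_succ_iff.mp (Finset.mem_range.mp hk)
    rw [deriv_law hf γ W hmod (m-k) z hz]
    have hext : ∑ s ∈ Finset.range (m-k+1), dcoef W (m-k) s * kK γ z ^ (m-k-s) * deriv^[s] f z
        = ∑ s ∈ Finset.range (m+1), dcoef W (m-k) s * kK γ z ^ (m-k-s) * deriv^[s] f z := by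
      apply Finset.sum_subset (Finset.range_subset_range.2 (by omega))
      intro s hs hns
      have : m - k < s := by
        simp only [Finset.mem_range] at hs hns
        omega
      simp [dcoef_zero this]
    rw [hext]
    calc jJ γ z ^ (-ξ) * (acoef W m k
            * (jJ γ z ^ (W+1+2*(m-k))
                * ∑ s ∈ Finset.range (m+1), dcoef W (m-k) s * kK γ z ^ (m-k-s) * deriv^[s] f z)
            * ((jJ γ z ^ 2)^k * ((-(kK γ z))^(k-t) * (k.choose t : ℂ))))
        = (jJ γ z ^ (-ξ) * ((jJ γ z ^ 2)^k * jJ γ z ^ (W+1+2*(m-k))))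
            * (acoef W m k * ((-(kK γ z))^(k-t) * (k.choose t : ℂ))
              * ∑ s ∈ Finset.range (m+1), dcoef W (m-k) s * kK γ z ^ (m-k-s) * deriv^[s] f z) := by
          ring
      _ = acoef W m k * ((-(kK γ z))^(k-t) * (k.choose t : ℂ))
              * ∑ s ∈ Finset.range (m+1), dcoef W (m-k) s * kK γ z ^ (m-k-s) * deriv^[s] f z := by
          rw [hJcollapse k hkm, one_mul]
      _ = ∑ s ∈ Finset.range (m+1),
            (acoef W m k * dcoef W (m-k) s * (-1:ℂ)^(k-t) * kK γ z^((k-t)+(m-k-s)) * (k.choose t : ℂ))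
              * deriv^[s] f z := by
          rw [Finset.mul_sum]
          apply Finset.sum_congr rfl
          intro s hs
          rw [neg_pow, pow_add]
          ring
  rw [Finset.sum_congr rfl hstep, Finset.sum_comm]
  have hinner : ∀ s ∈ Finset.range (m+1),
      ∑ k ∈ Finset.range (m+1),
        (acoef W m k * dcoef W (m-k) s * (-1:ℂ)^(k-t) * kK γ z^((k-t)+(m-k-s)) * (k.choose t : ℂ))
          * deriv^[s] f z
      = if s = m - t then acoef W m t * deriv^[s] f z else 0 := by
    intro s hs
    have hsm : s ≤ m := Nat.lt_succ_iff.mp (Finset.mem_range.mp hs)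
    rw [← Finset.sum_mul, core W m t s ht hsm (kK γ z)]
    split
    · rfl
    · rw [zero_mul]
  rw [Finset.sum_congr rfl hinner]
  rw [Finset.sum_ite_eq' (Finset.range (m+1)) (m-t) (fun s => acoef W m t * deriv^[s] f z)]
  rw [if_pos (Finset.mem_range.mpr (by omega))]

end KeySum
section KeyInv

lemma key_inv (f : ℂ → ℂ) (hf : Hol f) (γ : SL2R) (W m δ : ℕ) (ξ : ℤ)
    (hxi : ξ = (W:ℤ)+1+2*m)
    (hmod : ∀ z ∈ UHP, f (mact γ z) = jJ γ z ^ (W+1) * f z)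
    {z : ℂ} (hz : z ∈ UHP) :
    polyAct ξ (fun x => Polynomial.C (m.factorial : ℂ) * PiDM δ m (XiHat ((W:ℤ)+1) δ f) x) γ z
      = Polynomial.C (m.factorial : ℂ) * PiDM δ m (XiHat ((W:ℤ)+1) δ f) z := by
  apply Polynomial.ext
  intro t
  simp only [polyAct]
  rw [Polynomial.coeff_C_mul,
    coeff_comp _ (corr_natDegree m δ W f (mact γ z)) (jJ γ z ^ 2) (kK γ z) t]
  rw [corr_coeff m δ W f z t]
  by_cases ht : t ≤ m
  · rw [if_pos ht]
    rw [← key_sum f hf γ W m ξ hxi hmod hz t ht]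
    congr 1
    apply Finset.sum_congr rfl
    intro k hk
    rw [corr_coeff m δ W f (mact γ z) k,
      if_pos (Nat.lt_succ_iff.mp (Finset.mem_range.mp hk))]
  · rw [if_neg ht]
    have h0 : ∑ k ∈ Finset.range (m+1),
        (Polynomial.C (m.factorial : ℂ) * PiDM δ m (XiHat ((W:ℤ)+1) δ f) (mact γ z)).coeff k
          * ((jJ γ z ^ 2)^k * ((-(kK γ z))^(k-t) * (k.choose t : ℂ))) = 0 := by
      apply Finset.sum_eq_zero
      intro k hk
      have : k < t := by
        have := Finset.mem_range.mp hk
        omega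
      simp [Nat.choose_eq_zero_of_lt this]
    rw [h0, mul_zero]

lemma top_coeff_modular (F : ℂ → Polynomial ℂ) (m : ℕ) (ξ : ℤ) (W : ℕ)
    (hxi : ξ = (W:ℤ)+1+2*m)
    (hdeg : ∀ z : ℂ, (F z).degree ≤ (m : WithBot ℕ)) (γ : SL2R)
    (hinvγ : ∀ z ∈ UHP, polyAct ξ F γ z = F z) :
    ∀ z ∈ UHP, (F (mact γ z)).coeff m = jJ γ z ^ (W+1) * (F z).coeff m := by
  intro z hz
  have hJ := jJ_ne γ hz
  have h0 := congrArg (fun p : Polynomial ℂ => p.coeff m) (hinvγ z hz)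
  simp only [polyAct] at h0
  rw [Polynomial.coeff_C_mul] at h0
  have hnd : (F (mact γ z)).natDegree < m + 1 :=
    Nat.lt_succ_iff.mpr (Polynomial.natDegree_le_iff_degree_le.2 (hdeg _))
  rw [coeff_comp _ hnd (jJ γ z ^ 2) (kK γ z) m] at h0
  have hsingle : ∑ k ∈ Finset.range (m+1), (F (mact γ z)).coeff k
        * ((jJ γ z^2)^k * ((-(kK γ z))^(k-m) * (k.choose m : ℂ)))
      = (F (mact γ z)).coeff m * jJ γ z ^ (2*m) := by
    rw [Finset.sum_eq_single_of_mem m (Finset.mem_range.mpr (by omega))]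
    · rw [Nat.sub_self, pow_zero, Nat.choose_self, pow_mul]
      push_cast
      ring
    · intro k hk hkm
      have : k < m := by
        have := Finset.mem_range.mp hk
        omega
      simp [Nat.choose_eq_zero_of_lt this]
  rw [hsingle] at h0
  have key : jJ γ z ^ (W+1 : ℕ) * (jJ γ z ^ (-ξ) * jJ γ z ^ (2*m)) = 1 := by
    rw [← zpow_natCast (jJ γ z) (W+1), ← zpow_natCast (jJ γ z) (2*m), ← zpow_add₀ hJ,
      ← zpow_add₀ hJ,
      show ((W+1:ℕ):ℤ) + (-ξ + ((2*m:ℕ):ℤ)) = 0 from by push_cast; omega, zpow_zero]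
  calc (F (mact γ z)).coeff m
      = (jJ γ z ^ (W+1:ℕ) * (jJ γ z ^ (-ξ) * jJ γ z ^ (2*m))) * (F (mact γ z)).coeff m := by
        rw [key, one_mul]
    _ = jJ γ z ^ (W+1) * (jJ γ z ^ (-ξ) * ((F (mact γ z)).coeff m * jJ γ z ^ (2*m))) := by
        ring
    _ = jJ γ z ^ (W+1) * (F z).coeff m := by rw [h0]

lemma acoef_self (W m : ℕ) : acoef W m m = 1 := by
  unfold acoef
  rw [Nat.sub_self, Nat.factorial_zero, Nat.zero_add]
  field_simp
  rw [Nat.cast_one]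
  exact div_self (mul_ne_zero (fact_ne m) (fact_ne W))

end KeyInv
-- STATEMENT 14
theorem stmt14 (Γ : Subgroup SL2R) (hΓ : DiscreteTopology Γ) (m : ℕ) (hm : 1 ≤ m)
    (ξ : ℤ) (hξ : 2 * (m : ℤ) < ξ) (δ : ℕ)
    (F : ℂ → Polynomial ℂ) (hF : IsQP Γ ξ m F) :
    IsQP Γ ξ (m - 1) fun z =>
      F z - Polynomial.C (m.factorial : ℂ) *
        PiDM δ m (XiHat (ξ - 2 * m) δ fun w => (F w).coeff m) z := by
  obtain ⟨⟨hdeg, hhol⟩, hinv⟩ := hF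
  obtain ⟨W, hWeq⟩ : ∃ W : ℕ, ξ - 2*(m:ℤ) = (W:ℤ)+1 := ⟨(ξ - 2*m - 1).toNat, by omega⟩
  have hxi : ξ = (W:ℤ)+1+2*m := by omega
  rw [hWeq]
  set f : ℂ → ℂ := fun w => (F w).coeff m with hfdef
  have hf : Hol f := hhol m
  have hmodular : ∀ γ ∈ Γ, ∀ z ∈ UHP, f (mact γ z) = jJ γ z ^ (W+1) * f z := by
    intro γ hγ
    exact top_coeff_modular F m ξ W hxi hdeg γ (fun z hz => hinv γ hγ z hz)
  refine ⟨⟨?_, ?_⟩, ?_⟩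
  · -- degree bound
    intro z
    rw [Polynomial.degree_le_iff_coeff_zero]
    intro N hN
    have hNm : m ≤ N := by
      have h1 : (m - 1 : ℕ) < N := by exact_mod_cast hN
      omega
    rw [Polynomial.coeff_sub, corr_coeff]
    rcases Nat.eq_or_lt_of_le hNm with h | h
    · subst h
      rw [if_pos le_rfl, acoef_self, one_mul, Nat.sub_self, Function.iterate_zero_apply]
      exact sub_self _
    · rw [if_neg (by omega), sub_zero]
      exact Polynomial.coeff_eq_zero_of_degree_lt
        (lt_of_le_of_lt (hdeg z) (by exact_mod_cast h))
  · -- holomorphy of coefficients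
    intro r
    have heq : (fun z => ((F z - Polynomial.C (m.factorial : ℂ)
          * PiDM δ m (XiHat ((W:ℤ)+1) δ f) z).coeff r))
        = fun z => (F z).coeff r
            - (if r ≤ m then acoef W m r * deriv^[m-r] f z else 0) := by
      funext z
      rw [Polynomial.coeff_sub, corr_coeff]
    rw [heq]
    apply DifferentiableOn.sub (hhol r)
    by_cases hr : r ≤ m
    · simp only [if_pos hr]
      exact (hol_iter hf (m-r)).const_mul (acoef W m r)
    · simp only [if_neg hr]
      exact differentiableOn_const 0
  · -- invariance
    intro γ hγ z hz
    have hlin : polyAct ξ (fun x => F x - Polynomial.C (m.factorial : ℂ)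
          * PiDM δ m (XiHat ((W:ℤ)+1) δ f) x) γ z
        = polyAct ξ F γ z
          - polyAct ξ (fun x => Polynomial.C (m.factorial : ℂ)
              * PiDM δ m (XiHat ((W:ℤ)+1) δ f) x) γ z := by
      simp only [polyAct]
      rw [Polynomial.sub_comp]
      ring
    rw [hlin, hinv γ hγ z hz, key_inv f hf γ W m δ ξ hxi (hmodular γ hγ) hz]
end
end
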